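/- Let F be a field and let q ≥ 1 be an integer. In the quotient ring F[X,Y]/(Y^q + Y − X^{q+1}), the images of the monomials X^i Y^j for integers 0 ≤ i ≤ q and j ≥ 0 form a basis of the quotient as an F-vector space. -/

import Mathlib

/-- The ideal generated by `Y^q + Y - X^(q+1)` in `F[X,Y]`. -/
noncomputable def hermitianIdeal (F : Type*) [Field F] (q : ℕ) : Ideal (MvPolynomial (Fin 2) F) :=
  Ideal.span {(MvPolynomial.X 1 : MvPolynomial (Fin 2) F) ^ q + MvPolynomial.X 1 -
    (MvPolynomial.X 0) ^ (q + 1)}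

/-- The image of the monomial `X^i Y^j` in the quotient ring
`F[X,Y]/(Y^q + Y - X^(q+1))`, indexed by pairs `(i,j)` with `0 ≤ i ≤ q`. -/
noncomputable def hermitianMonomial (F : Type*) [Field F] (q : ℕ) (p : {p : ℕ × ℕ // p.1 ≤ q}) :
    MvPolynomial (Fin 2) F ⧸ hermitianIdeal F q :=
  Ideal.Quotient.mk (hermitianIdeal F q)
    ((MvPolynomial.X 0) ^ p.1.1 * (MvPolynomial.X 1) ^ p.1.2)

/-- `F[X,Y] ≃ (F[Y])[X]`, sending `X 0` to the outer variable and `X 1` to the inner one. -/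
noncomputable def hermPolyEquiv (F : Type*) [Field F] :
    MvPolynomial (Fin 2) F ≃ₐ[F] Polynomial (Polynomial F) :=
  (MvPolynomial.finSuccEquiv F 1).trans
    (Polynomial.mapAlgEquiv
      ((MvPolynomial.finSuccEquiv F 0).trans
        (Polynomial.mapAlgEquiv (MvPolynomial.isEmptyAlgEquiv F (Fin 0)))))

@[simp] lemma hermPolyEquiv_X0 (F : Type*) [Field F] :
    hermPolyEquiv F (MvPolynomial.X 0) = Polynomial.X := by
  simp [hermPolyEquiv, MvPolynomial.finSuccEquiv_X_zero, Polynomial.map_X]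

@[simp] lemma hermPolyEquiv_X1 (F : Type*) [Field F] :
    hermPolyEquiv F (MvPolynomial.X 1) = Polynomial.C Polynomial.X := by
  have h1 : (1 : Fin 2) = Fin.succ 0 := rfl
  unfold hermPolyEquiv
  rw [AlgEquiv.trans_apply, h1, MvPolynomial.finSuccEquiv_X_succ, Polynomial.coe_mapAlgEquiv,
    Polynomial.map_C]
  simp [MvPolynomial.finSuccEquiv_X_zero]

/-- The monic polynomial `X^(q+1) - (Y^q + Y)` in `(F[Y])[X]`. -/
noncomputable def hermG (F : Type*) [Field F] (q : ℕ) : Polynomial (Polynomial F) :=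
  Polynomial.X ^ (q + 1) - Polynomial.C (Polynomial.X ^ q + Polynomial.X)

lemma hermG_monic (F : Type*) [Field F] (q : ℕ) : (hermG F q).Monic :=
  Polynomial.monic_X_pow_sub_C _ (Nat.succ_ne_zero q)

lemma hermG_natDegree (F : Type*) [Field F] (q : ℕ) : (hermG F q).natDegree = q + 1 :=
  Polynomial.natDegree_X_pow_sub_C

lemma hermIdeal_map (F : Type*) [Field F] (q : ℕ) :
    Ideal.span {hermG F q} =
      (hermitianIdeal F q).map
        (hermPolyEquiv F : MvPolynomial (Fin 2) F →+* Polynomial (Polynomial F)) := by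
  rw [hermitianIdeal, Ideal.map_span, Set.image_singleton]
  have : (hermPolyEquiv F : MvPolynomial (Fin 2) F →+* Polynomial (Polynomial F))
      ((MvPolynomial.X 1 : MvPolynomial (Fin 2) F) ^ q + MvPolynomial.X 1 -
        (MvPolynomial.X 0) ^ (q + 1)) = -(hermG F q) := by
    simp only [map_sub, map_add, map_pow, RingHom.coe_coe, hermPolyEquiv_X0, hermPolyEquiv_X1,
      hermG]
    rw [← Polynomial.C_pow, ← Polynomial.C_add]
    ring
  rw [this, Ideal.span_singleton_neg]

/-- Index equivalence. -/
def hermIdx (q d : ℕ) (hd : d = q + 1) : (ℕ × Fin d) ≃ {p : ℕ × ℕ // p.1 ≤ q} where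
  toFun x := ⟨(x.2.1, x.1), by have := x.2.isLt; omega⟩
  invFun p := (p.1.2, ⟨p.1.1, by have := p.2; omega⟩)
  left_inv x := rfl
  right_inv p := rfl

/-- In `F[X,Y]/(Y^q + Y - X^(q+1))`, the images of the monomials `X^i Y^j` with
`0 ≤ i ≤ q` and `j ≥ 0` form an `F`-vector space basis of the quotient. -/
theorem hermitian_monomials_basis (F : Type*) [Field F] (q : ℕ) (hq : 1 ≤ q) :
    LinearIndependent F (hermitianMonomial F q) ∧
      Submodule.span F (Set.range (hermitianMonomial F q)) = ⊤ := by
  set g := hermG F q with hgdef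
  have hmap := hermIdeal_map F q
  let eqv : (MvPolynomial (Fin 2) F ⧸ hermitianIdeal F q) ≃ₐ[F] AdjoinRoot g :=
    Ideal.quotientEquivAlg (hermitianIdeal F q) (Ideal.span {g}) (hermPolyEquiv F) hmap
  have heqv : ∀ a : MvPolynomial (Fin 2) F,
      eqv (Ideal.Quotient.mk (hermitianIdeal F q) a) = AdjoinRoot.mk g (hermPolyEquiv F a) :=
    fun a => rfl
  let pb := AdjoinRoot.powerBasis' (hermG_monic F q)
  let b0 : Module.Basis (ℕ × Fin g.natDegree) F (AdjoinRoot g) :=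
    (Polynomial.basisMonomials F).smulTower pb.basis
  let b : Module.Basis {p : ℕ × ℕ // p.1 ≤ q} F (MvPolynomial (Fin 2) F ⧸ hermitianIdeal F q) :=
    (b0.map eqv.symm.toLinearEquiv).reindex (hermIdx q _ (hermG_natDegree F q))
  have hb : ⇑b = hermitianMonomial F q := by
    funext p
    obtain ⟨⟨i, j⟩, hp⟩ := p
    have hcalc : b ⟨(i, j), hp⟩ =
        eqv.symm ((Polynomial.basisMonomials F j : Polynomial F) • (AdjoinRoot.root g ^ i)) := by
      simp only [b, Module.Basis.reindex_apply, Module.Basis.map_apply, AlgEquiv.toLinearEquiv_apply]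
      congr 1
      have : (hermIdx q _ (hermG_natDegree F q)).symm ⟨(i, j), hp⟩ =
          (j, ⟨i, by have := hermG_natDegree F q; omega⟩) := rfl
      rw [this]
      erw [Module.Basis.smulTower_apply]
      congr 1
      exact pb.basis_eq_pow _
    rw [hcalc]
    rw [AlgEquiv.symm_apply_eq]
    simp only [hermitianMonomial]
    rw [heqv]
    rw [Polynomial.coe_basisMonomials]
    have hroot : (AdjoinRoot.root g) ^ i = AdjoinRoot.mk g (Polynomial.X ^ i) := by
      rw [map_pow, AdjoinRoot.mk_X]
    rw [hroot, AdjoinRoot.smul_mk]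
    congr 1
    show (Polynomial.monomial j 1 : Polynomial F) • Polynomial.X ^ i = _
    rw [Polynomial.smul_eq_C_mul, ← Polynomial.X_pow_eq_monomial]
    conv_rhs => rw [map_mul, map_pow, map_pow, hermPolyEquiv_X0, hermPolyEquiv_X1]
    rw [← Polynomial.C_pow]
    ring
  constructor
  · rw [← hb]; exact b.linearIndependent
  · rw [← hb]; exact b.span_eq
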